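/- Let X be a smooth connected complete variety of dimension m over an infinite field k. If X is stably rational, i.e. there exists a ≥ 0 such that X × ℙᵃ_k is birational to ℙ^{m+a}_k over k, then X has a k-rational point. -/

import Mathlib

open AlgebraicGeometry CategoryTheory CategoryTheory.Limits MvPolynomial

universe u v

noncomputable section

attribute [local instance] MvPolynomial.gradedAlgebra

/-- The base scheme `Spec k`. -/
abbrev SpecBase (k : Type u) [Field k] : Scheme.{u} := Spec (CommRingCat.of k)

/-- The affine line `𝔸¹_k` as a scheme over `k`. -/
def AffineLine (k : Type u) [Field k] : Scheme.{u} := Spec (CommRingCat.of (Polynomial k))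

/-- The structure morphism of `𝔸¹_k`. -/
def AffineLine.toSpec (k : Type u) [Field k] : AffineLine k ⟶ SpecBase k :=
  Spec.map (CommRingCat.ofHom (algebraMap k (Polynomial k)))

/-- Projective `n`-space `ℙⁿ_k = Proj k[x₀, …, xₙ]` over `k`. -/
def ProjSpace (k : Type u) [Field k] (n : ℕ) : Scheme.{u} :=
  Proj (homogeneousSubmodule (Fin (n + 1)) k)

/-- The structure morphism of `ℙⁿ_k`. -/
def ProjSpace.toSpec (k : Type u) [Field k] (n : ℕ) : ProjSpace k n ⟶ SpecBase k :=
  Proj.toSpecZero _ ≫ Spec.map (CommRingCat.ofHom (algebraMap k _))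

/-- `X` (a scheme over `k` via `sX : X ⟶ Spec k`) is the reduced closed subvariety of `ℙⁿ_k`
cut out by the family `S` of polynomials, i.e. `X → ℙⁿ_k` is a closed immersion of the reduced
scheme `X` onto the zero locus of `S`, compatibly with the structure morphisms. -/
def IsProjSubvariety (k : Type u) [Field k] (n : ℕ) (S : Set (MvPolynomial (Fin (n + 1)) k))
    (X : Scheme.{u}) (sX : X ⟶ SpecBase k) : Prop :=
  IsReduced X ∧ ∃ i : X ⟶ ProjSpace k n, IsClosedImmersion i ∧ i ≫ ProjSpace.toSpec k n = sX ∧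
    Set.range i.base = ProjectiveSpectrum.zeroLocus (homogeneousSubmodule (Fin (n + 1)) k) S

/-- `X` has a `k`-rational point, i.e. the structure morphism has a section. -/
def HasRatPoint (k : Type u) [Field k] (X : Scheme.{u}) (sX : X ⟶ SpecBase k) : Prop :=
  ∃ p : SpecBase k ⟶ X, p ≫ sX = 𝟙 (SpecBase k)

/-- A motivic measure on varieties over `k` with values in a commutative ring `R`: an
assignment, to every scheme over `k`, of an element of `R` which, on separated schemes of
finite type over `k` (i.e. on the category `Var_k`, reducedness being irrelevant), is
invariant under isomorphisms over `k`, satisfies the scissor relations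
`[X] = [X ∖ Z] + [Z]` for closed subschemes `Z ⊆ X`, is multiplicative on fibre products
over `k`, and sends `Spec k` to `1`.  These are exactly the defining relations of the
Grothendieck ring of varieties `K₀(Var_k)`, so an identity holds in `K₀(Var_k)` if and
only if it holds for every motivic measure. -/
structure MotivicMeasure (k : Type u) [Field k] (R : Type v) [CommRing R] where
  cl : ∀ (X : Scheme.{u}), (X ⟶ SpecBase k) → R
  cl_point : cl (SpecBase k) (𝟙 (SpecBase k)) = 1
  cl_iso : ∀ {X Y : Scheme.{u}} (sX : X ⟶ SpecBase k) (sY : Y ⟶ SpecBase k) (e : X ≅ Y),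
    LocallyOfFiniteType sX → QuasiCompact sX → IsSeparated sX →
    e.hom ≫ sY = sX → cl X sX = cl Y sY
  cl_scissor : ∀ {X Z : Scheme.{u}} (sX : X ⟶ SpecBase k) (i : Z ⟶ X),
    LocallyOfFiniteType sX → QuasiCompact sX → IsSeparated sX →
    IsClosedImmersion i → ∀ U : X.Opens, (U : Set X) = (Set.range i.base)ᶜ →
    cl X sX = cl U.toScheme (U.ι ≫ sX) + cl Z (i ≫ sX)
  cl_prod : ∀ {X Y : Scheme.{u}} (sX : X ⟶ SpecBase k) (sY : Y ⟶ SpecBase k),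
    LocallyOfFiniteType sX → QuasiCompact sX → IsSeparated sX →
    LocallyOfFiniteType sY → QuasiCompact sY → IsSeparated sY →
    cl (pullback sX sY) (pullback.fst sX sY ≫ sX) = cl X sX * cl Y sY

/-- The class of the affine line, `𝕃 = [𝔸¹_k]`, under a motivic measure. -/
def MotivicMeasure.lef {k : Type u} [Field k] {R : Type v} [CommRing R]
    (μ : MotivicMeasure k R) : R :=
  μ.cl (AffineLine k) (AffineLine.toSpec k)

/-- `X` and `Y` are birational over `k`: they contain isomorphic dense open subschemes. -/
def BirationalOver (k : Type u) [Field k] (X Y : Scheme.{u})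
    (sX : X ⟶ SpecBase k) (sY : Y ⟶ SpecBase k) : Prop :=
  ∃ (U : X.Opens) (V : Y.Opens) (e : U.toScheme ≅ V.toScheme),
    Dense (U : Set X) ∧ Dense (V : Set Y) ∧ e.hom ≫ V.ι ≫ sY = U.ι ≫ sX

end


noncomputable section StablyRationalHelpers
attribute [local instance] MvPolynomial.gradedAlgebra

variable {k : Type u} [Field k] {n : ℕ}
abbrev Amb (k : Type u) [Field k] (n : ℕ) := MvPolynomial (Fin (n+1)) k

def valHom : HomogeneousLocalization.Away (homogeneousSubmodule (Fin (n+1)) k) (X 0) →+*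
    Localization (Submonoid.powers (X 0 : Amb k n)) where
  toFun := HomogeneousLocalization.val
  map_one' := HomogeneousLocalization.val_one
  map_mul' := HomogeneousLocalization.val_mul
  map_zero' := HomogeneousLocalization.val_zero
  map_add' := HomogeneousLocalization.val_add

def liftEval (b : Fin (n+1) → k) (hb : eval b (X 0 : Amb k n) ≠ 0) :
    Localization (Submonoid.powers (X 0 : Amb k n)) →+* k :=
  IsLocalization.Away.lift (g := eval b) (X 0) (isUnit_iff_ne_zero.mpr hb)

lemma liftEval_alg (b : Fin (n+1) → k) (hb : eval b (X 0 : Amb k n) ≠ 0) (p : Amb k n) :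
    liftEval b hb (algebraMap (Amb k n) _ p) = eval b p :=
  IsLocalization.Away.lift_eq _ _ _

def evalAway (b : Fin (n+1) → k) (hb : eval b (X 0 : Amb k n) ≠ 0) :
    HomogeneousLocalization.Away (homogeneousSubmodule (Fin (n+1)) k) (X 0) →+* k :=
  (liftEval b hb).comp valHom

lemma evalAway_ne_zero (b : Fin (n+1) → k) (hb : eval b (X 0 : Amb k n) ≠ 0)
    (c : HomogeneousLocalization.NumDenSameDeg (homogeneousSubmodule (Fin (n+1)) k)
      (Submonoid.powers (X 0 : Amb k n)))
    (hnum : eval b (c.num : Amb k n) ≠ 0) :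
    evalAway b hb (HomogeneousLocalization.mk c) ≠ 0 := by
  have hval : (HomogeneousLocalization.mk c).val =
      Localization.mk (c.num : Amb k n) ⟨c.den, c.den_mem⟩ :=
    HomogeneousLocalization.val_mk c
  have key : evalAway b hb (HomogeneousLocalization.mk c) * eval b (c.den : Amb k n)
      = eval b (c.num : Amb k n) := by
    show liftEval b hb (HomogeneousLocalization.mk c).val * _ = _
    rw [hval, Localization.mk_eq_mk']
    rw [← liftEval_alg b hb (c.den : Amb k n), ← liftEval_alg b hb (c.num : Amb k n), ← map_mul]
    congr 1
    exact IsLocalization.mk'_spec _ _ _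
  intro h0
  rw [h0, zero_mul] at key
  exact hnum key.symm

lemma evalAway_fromZero (b : Fin (n+1) → k) (hb : eval b (X 0 : Amb k n) ≠ 0) (c : k) :
    evalAway b hb (HomogeneousLocalization.fromZeroRingHom
      (homogeneousSubmodule (Fin (n+1)) k) (Submonoid.powers (X 0 : Amb k n))
      (algebraMap k _ c)) = c := by
  show liftEval b hb (HomogeneousLocalization.mk _).val = c
  rw [HomogeneousLocalization.val_mk]
  have h1 : (⟨((1 : homogeneousSubmodule (Fin (n+1)) k 0) : Amb k n), by
      simpa using Submonoid.one_mem _⟩ : Submonoid.powers (X 0 : Amb k n)) = 1 := by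
    ext; simp
  dsimp only
  rw [h1, Localization.mk_one_eq_algebraMap, liftEval_alg]
  have : ((algebraMap k (homogeneousSubmodule (Fin (n+1)) k 0) c : Amb k n)) = C c := rfl
  rw [this, eval_C]

lemma exists_ratPoint_of_dense (k : Type u) [Field k] [Infinite k] (n : ℕ)
    (V : (ProjSpace k n).Opens) (hV : Dense (V : Set (ProjSpace k n))) :
    ∃ q : SpecBase k ⟶ V.toScheme, q ≫ V.ι ≫ ProjSpace.toSpec k n = 𝟙 (SpecBase k) := by
  classical
  set 𝒜 := homogeneousSubmodule (Fin (n+1)) k with h𝒜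
  have fdeg : (X 0 : Amb k n) ∈ 𝒜 1 := by
    rw [mem_homogeneousSubmodule]; exact isHomogeneous_X _ _
  let ι : Spec (.of (HomogeneousLocalization.Away 𝒜 (X 0))) ⟶ ProjSpace k n :=
    Proj.awayι 𝒜 (X 0) fdeg one_pos
  haveI hOI : IsOpenImmersion ι := by
    show IsOpenImmersion (Proj.awayι 𝒜 (X 0) fdeg one_pos); infer_instance
  -- nontriviality
  have hb1 : eval (fun _ => (1 : k)) (X 0 : Amb k n) ≠ 0 := by simp
  have : Nontrivial (HomogeneousLocalization.Away 𝒜 (X 0)) :=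
    (evalAway (fun _ => 1) hb1).domain_nontrivial
  -- find a point of Spec A inside ι ⁻¹' V
  have hne : (Set.range ι.base ∩ (V : Set (ProjSpace k n))).Nonempty :=
    hV.inter_open_nonempty _ ι.isOpenEmbedding.isOpen_range
      (Set.range_nonempty (h := inferInstanceAs
        (Nonempty (PrimeSpectrum (HomogeneousLocalization.Away 𝒜 (X 0))))) _)
  obtain ⟨y, ⟨x, rfl⟩, hyV⟩ := hne
  have hVopen : IsOpen (ι.base ⁻¹' (V : Set (ProjSpace k n))) :=
    V.2.preimage ι.base.hom.continuous
  obtain ⟨_, ⟨g, rfl⟩, hxg, hgsub⟩ :=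
    PrimeSpectrum.isTopologicalBasis_basic_opens.exists_subset_of_mem_open hyV hVopen
  obtain ⟨c, rfl⟩ := HomogeneousLocalization.mk_surjective g
  have hnum0 : (c.num : Amb k n) ≠ 0 := by
    intro h
    apply hxg
    have : HomogeneousLocalization.mk c = 0 :=
      HomogeneousLocalization.mk_eq_zero_of_num c (by exact_mod_cast Subtype.ext h)
    show HomogeneousLocalization.mk c ∈ x.asIdeal
    rw [this]; exact x.asIdeal.zero_mem
  have hprod : (X 0 : Amb k n) * c.num ≠ 0 :=
    mul_ne_zero (X_ne_zero _) hnum0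
  have hex : ∃ b : Fin (n+1) → k, eval b ((X 0 : Amb k n) * c.num) ≠ 0 := by
    by_contra h
    push_neg at h
    exact hprod (MvPolynomial.funext (fun b => by simpa using h b))
  obtain ⟨b, hb'⟩ := hex
  rw [map_mul] at hb'
  have hb : eval b (X 0 : Amb k n) ≠ 0 := fun h => hb' (by rw [h, zero_mul])
  have hnum : eval b (c.num : Amb k n) ≠ 0 := fun h => hb' (by rw [h, mul_zero])
  let φ := evalAway b hb
  let q0 : SpecBase k ⟶ Spec (.of (HomogeneousLocalization.Away 𝒜 (X 0))) :=
    Spec.map (CommRingCat.ofHom φ)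
  -- every point maps into V
  have hpt : ∀ pt : SpecBase k, ι.base (q0.base pt) ∈ (V : Set (ProjSpace k n)) := by
    intro pt
    apply hgsub
    show q0.base pt ∈ PrimeSpectrum.basicOpen _
    show HomogeneousLocalization.mk c ∉ (q0.base pt).asIdeal
    intro hmem
    have h1 : φ (HomogeneousLocalization.mk c) ∈ pt.asIdeal := hmem
    have h2 : pt.asIdeal = ⊥ := by
      rcases (Ideal.eq_bot_or_top (K := k) pt.asIdeal) with h | h
      · exact h
      · exact absurd h pt.isPrime.ne_top
    rw [h2, Ideal.mem_bot] at h1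
    exact evalAway_ne_zero b hb c hnum h1
  have hrange : Set.range (q0 ≫ ι).base ⊆ Set.range V.ι.base := by
    rw [Scheme.Opens.range_ι]
    rintro _ ⟨pt, rfl⟩
    exact hpt pt
  refine ⟨IsOpenImmersion.lift V.ι (q0 ≫ ι) hrange, ?_⟩
  have hfac : IsOpenImmersion.lift V.ι (q0 ≫ ι) hrange ≫ V.ι = q0 ≫ ι :=
    IsOpenImmersion.lift_fac _ _ hrange
  rw [← Category.assoc, hfac, Category.assoc]
  show q0 ≫ ι ≫ Proj.toSpecZero 𝒜 ≫ Spec.map (CommRingCat.ofHom (algebraMap k _)) = _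
  rw [show ι ≫ Proj.toSpecZero 𝒜 ≫ Spec.map (CommRingCat.ofHom (algebraMap k _)) = _ from
    Proj.awayι_toSpecZero_assoc 𝒜 (X 0) fdeg one_pos _]
  rw [← Spec.map_comp, ← Spec.map_comp, ← Spec.map_id]
  congr 1
  ext (a : k)
  exact evalAway_fromZero b hb a

end StablyRationalHelpers

/-- Let `X` be a smooth connected complete variety of dimension `m` over
an infinite field `k`.  If `X` is stably rational, i.e. there is an `a ≥ 0` such that
`X ×_k ℙᵃ_k` is birational to `ℙ^{m+a}_k` over `k`, then `X` has a `k`-rational point. -/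
theorem hasRatPoint_of_stablyRational (k : Type u) [Field k] [Infinite k]
    (X : Scheme.{u}) (sX : X ⟶ SpecBase k) (m : ℕ)
    (hred : IsReduced X) (hsmooth : IsSmooth sX) (hconn : ConnectedSpace X)
    (hproper : IsProper sX) (hdim : topologicalKrullDim X = (m : WithBot ℕ∞))
    (hsr : ∃ a : ℕ, BirationalOver k (pullback sX (ProjSpace.toSpec k a))
      (ProjSpace k (m + a))
      (pullback.fst sX (ProjSpace.toSpec k a) ≫ sX) (ProjSpace.toSpec k (m + a))) :
    HasRatPoint k X sX := by
  obtain ⟨a, U, V, e, hU, hVd, he⟩ := hsr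
  obtain ⟨q, hq⟩ := exists_ratPoint_of_dense k (m + a) V hVd
  refine ⟨q ≫ e.inv ≫ U.ι ≫ pullback.fst sX (ProjSpace.toSpec k a), ?_⟩
  simp only [Category.assoc]
  rw [← he, Iso.inv_hom_id_assoc]
  simpa using hq
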